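/- Let d ≥ 2 and let c = (c_λ)_{λ⊢2d} be a coefficient vector. Then the symmetric form f^{(n)} = Σ_{λ⊢2d} c_λ p_λ^{(n)} is nonnegative on ℝ^n for every n ≥ 2d if and only if the 2d-variate polynomial Φ_c(s,t) is nonnegative on Δ × ℝ^d, where Δ := {α ∈ [0,1]^d : α_1 + ⋯ + α_d = 1} is the standard simplex in ℝ^d. -/

import Mathlib

open MvPolynomial

/-- The i-th normalized power sum `p_i^{(n)} = (1/n)(x_1^i + ⋯ + x_n^i)`. -/
noncomputable def psum (n i : ℕ) : MvPolynomial (Fin n) ℝ :=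
  C ((n : ℝ)⁻¹) * ∑ j : Fin n, X j ^ i

/-- For a partition `λ` of `k`, `p_λ^{(n)} = p_{λ_1}^{(n)} ⋯ p_{λ_l}^{(n)}`. -/
noncomputable def pPart (n : ℕ) {k : ℕ} (lam : Nat.Partition k) : MvPolynomial (Fin n) ℝ :=
  (lam.parts.map (psum n)).prod

/-- The symmetric form `f^{(n)} = Σ_{λ ⊢ k} c_λ p_λ^{(n)}` determined by the
coefficient vector `c`. -/
noncomputable def symForm (n : ℕ) {k : ℕ} (c : Nat.Partition k → ℝ) : MvPolynomial (Fin n) ℝ :=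
  ∑ lam : Nat.Partition k, C (c lam) * pPart n lam

/-- `Φ_λ(s,t) = ∏_{i=1}^l (s_1 t_1^{λ_i} + ⋯ + s_d t_d^{λ_i})` for a partition
`λ = (λ_1,…,λ_l)` of `k`, as a function on `ℝ^d × ℝ^d`. -/
noncomputable def phiPart {k : ℕ} (d : ℕ) (lam : Nat.Partition k) (s t : Fin d → ℝ) : ℝ :=
  (lam.parts.map (fun i => ∑ j : Fin d, s j * t j ^ i)).prod

/-- `Φ_c = Σ_{λ ⊢ k} c_λ Φ_λ`. -/
noncomputable def phiForm {k : ℕ} (d : ℕ) (c : Nat.Partition k → ℝ) (s t : Fin d → ℝ) : ℝ :=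
  ∑ lam : Nat.Partition k, c lam * phiPart d lam s t

/-- empirical moments -/
noncomputable def momF (n : ℕ) (x : Fin n → ℝ) (i : ℕ) : ℝ := (n : ℝ)⁻¹ * ∑ a : Fin n, x a ^ i

/-- quadrature moments -/
noncomputable def momQ (d : ℕ) (s t : Fin d → ℝ) (i : ℕ) : ℝ := ∑ j : Fin d, s j * t j ^ i

lemma eval_psum (n i : ℕ) (x : Fin n → ℝ) : eval x (_root_.psum n i) = momF n x i := by
  simp [_root_.psum, momF]

lemma eval_pPart (n : ℕ) {k : ℕ} (lam : Nat.Partition k) (x : Fin n → ℝ) :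
    eval x (pPart n lam) = (lam.parts.map (momF n x)).prod := by
  rw [pPart, map_multiset_prod, Multiset.map_map]
  congr 1
  exact Multiset.map_congr rfl (fun i _ => eval_psum n i x)

lemma eval_symForm (n : ℕ) {k : ℕ} (c : Nat.Partition k → ℝ) (x : Fin n → ℝ) :
    eval x (symForm n c) = ∑ lam : Nat.Partition k, c lam * (lam.parts.map (momF n x)).prod := by
  rw [symForm, map_sum]
  exact Finset.sum_congr rfl fun lam _ => by rw [map_mul, eval_C, eval_pPart]

lemma phiPart_eq {k : ℕ} (d : ℕ) (lam : Nat.Partition k) (s t : Fin d → ℝ) :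
    phiPart d lam s t = (lam.parts.map (momQ d s t)).prod := rfl

/-- if all moments match, the forms agree -/
lemma eval_symForm_eq_phiForm {n d k : ℕ} (c : Nat.Partition k → ℝ) (x : Fin n → ℝ)
    (s t : Fin d → ℝ) (h : ∀ i, momF n x i = momQ d s t i) :
    eval x (symForm n c) = phiForm d c s t := by
  rw [eval_symForm, phiForm]
  refine Finset.sum_congr rfl fun lam _ => ?_
  rw [phiPart_eq]
  congr 2
  exact Multiset.map_congr rfl (fun i _ => h i)

lemma partition_eq_indiscrete {k : ℕ} (hk : 0 < k) (lam : Nat.Partition k)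
    (a : ℕ) (ha : a ∈ lam.parts) (hak : a = k) : lam = Nat.Partition.indiscrete k := by
  subst hak
  have h1 : lam.parts = {a} := by
    have hc := Multiset.cons_erase ha
    have hsum : (a ::ₘ lam.parts.erase a).sum = a := by rw [hc]; exact lam.parts_sum
    rw [Multiset.sum_cons] at hsum
    have h0 : (lam.parts.erase a).sum = 0 := by omega
    have : lam.parts.erase a = 0 := by
      by_contra h
      obtain ⟨b, hb⟩ := Multiset.exists_mem_of_ne_zero h
      have hbp : 0 < b := lam.parts_pos (Multiset.mem_of_mem_erase hb)
      have : b ≤ (lam.parts.erase a).sum :=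
        Multiset.single_le_sum (fun x _ => Nat.zero_le x) b hb
      omega
    rw [← hc, this]; rfl
  apply Nat.Partition.ext
  rw [h1]
  exact (Nat.Partition.indiscrete_parts (by omega)).symm

lemma mem_parts_lt {k : ℕ} (hk : 0 < k) (lam : Nat.Partition k)
    (hlam : lam ≠ Nat.Partition.indiscrete k) {a : ℕ} (ha : a ∈ lam.parts) : a < k := by
  have h1 : a ≤ k := by
    have := Multiset.single_le_sum (s := lam.parts) (fun x _ => Nat.zero_le x) a ha
    rwa [lam.parts_sum] at this
  rcases lt_or_eq_of_le h1 with h | h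
  · exact h
  · exact absurd (partition_eq_indiscrete hk lam a ha h) hlam

lemma card_parts_pos {k : ℕ} (hk : 0 < k) (lam : Nat.Partition k) :
    0 < Multiset.card lam.parts := by
  rcases Multiset.empty_or_exists_mem lam.parts with h | h
  · exfalso; have := lam.parts_sum; rw [h] at this; simp at this; omega
  · obtain ⟨a, ha⟩ := h
    exact Multiset.card_pos_iff_exists_mem.mpr ⟨a, ha⟩

lemma card_parts_eq_one {k : ℕ} (hk : 0 < k) (lam : Nat.Partition k)
    (h : Multiset.card lam.parts = 1) : lam = Nat.Partition.indiscrete k := by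
  obtain ⟨a, ha⟩ := Multiset.card_eq_one.mp h
  have haa : a ∈ lam.parts := by rw [ha]; simp
  apply partition_eq_indiscrete hk lam a haa
  have := lam.parts_sum
  rw [ha] at this; simpa using this

lemma indiscrete_parts {k : ℕ} (hk : 0 < k) :
    (Nat.Partition.indiscrete k).parts = {k} := by
  exact Nat.Partition.indiscrete_parts (by omega)
section Pad

/-- pad a weighted finset of nodes (card ≤ d) into `(s,t) : Fin d` data with the
same generalized moments for every `i` (including `i = 0` thanks to zero weights). -/
lemma pad_lemma (d : ℕ) (T : Finset ℝ) (hT : T.card ≤ d) (w : ℝ → ℝ)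
    (hw : ∀ v ∈ T, 0 ≤ w v) :
    ∃ s t : Fin d → ℝ, (∀ j, 0 ≤ s j) ∧ (∀ i : ℕ, momQ d s t i = ∑ v ∈ T, w v * v ^ i) := by
  classical
  set m := T.card with hm
  let e : Fin m ≃ {y // y ∈ T} := T.equivFin.symm
  refine ⟨fun j => if h : (j : ℕ) < m then w (e ⟨j, h⟩) else 0,
          fun j => if h : (j : ℕ) < m then (e ⟨j, h⟩ : ℝ) else 0, ?_, ?_⟩
  · intro j
    by_cases h : (j : ℕ) < m
    · simp only [dif_pos h]; exact hw _ (e ⟨j, h⟩).2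
    · simp [dif_neg h]
  · intro i
    set F : ℕ → ℝ := fun jn => if h : jn < m then w (e ⟨jn, h⟩) * ((e ⟨jn, h⟩ : ℝ)) ^ i else 0
      with hF
    have h1 : momQ d (fun j => if h : (j : ℕ) < m then w (e ⟨j, h⟩) else 0)
        (fun j => if h : (j : ℕ) < m then (e ⟨j, h⟩ : ℝ) else 0) i = ∑ j : Fin d, F (j : ℕ) := by
      refine Finset.sum_congr rfl fun j _ => ?_
      by_cases h : (j : ℕ) < m
      · simp only [hF, dif_pos h]
      · simp only [hF, dif_neg h, zero_mul]
    rw [h1, Fin.sum_univ_eq_sum_range F]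
    have hsplit : Finset.range d = Finset.range m ∪ Finset.Ico m d := by
      rw [Finset.range_eq_Ico, ← Finset.Ico_union_Ico_eq_Ico (Nat.zero_le m) hT, Finset.range_eq_Ico]
    rw [hsplit, Finset.sum_union (by
      simp only [Finset.range_eq_Ico]
      exact Finset.Ico_disjoint_Ico_consecutive 0 m d)]
    have h2 : ∑ jn ∈ Finset.Ico m d, F jn = 0 := by
      refine Finset.sum_eq_zero fun jn hjn => ?_
      have : ¬ jn < m := by simp at hjn; omega
      simp [hF, dif_neg this]
    rw [h2, add_zero]
    -- now sum over range m equals sum over T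
    rw [← Fin.sum_univ_eq_sum_range F]
    have h3 : ∑ j : Fin m, F (j : ℕ) = ∑ p : {y // y ∈ T}, w p * (p : ℝ) ^ i := by
      rw [← Equiv.sum_comp e (fun p => w p * (p : ℝ) ^ i)]
      refine Finset.sum_congr rfl fun j _ => ?_
      simp only [hF, dif_pos j.isLt]
    rw [h3, ← Finset.sum_coe_sort T (fun v => w v * v ^ i)]

end Pad

/-- the moments of the empirical measure as a sum over distinct values -/
lemma momF_eq_sum_image {n : ℕ} (x : Fin n → ℝ) (i : ℕ) :
    momF n x i = ∑ v ∈ Finset.image x Finset.univ,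
      ((Finset.univ.filter fun a => x a = v).card : ℝ) / n * v ^ i := by
  classical
  rw [momF, Finset.sum_comp (fun v : ℝ => v ^ i) x]
  rw [Finset.mul_sum]
  refine Finset.sum_congr rfl fun v _ => ?_
  simp [nsmul_eq_mul]
  ring

/-- small support case: exact representation -/
lemma quadrature_small (d n : ℕ) (hn : 0 < n) (x : Fin n → ℝ)
    (hcard : (Finset.image x Finset.univ).card ≤ d) :
    ∃ s t : Fin d → ℝ, (∀ j, 0 ≤ s j) ∧ (∀ i : ℕ, momQ d s t i = momF n x i) := by
  classical
  obtain ⟨s, t, hs, hmom⟩ := pad_lemma d (Finset.image x Finset.univ) hcard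
    (fun v => ((Finset.univ.filter fun a => x a = v).card : ℝ) / n)
    (fun v _ => by positivity)
  exact ⟨s, t, hs, fun i => by rw [hmom i, momF_eq_sum_image]⟩
section EvenMult
open Polynomial

lemma pos_of_no_root (F : Polynomial ℝ) (hlc : F.Monic) (hnr : ∀ z : ℝ, ¬ F.IsRoot z)
    (y : ℝ) : 0 < F.eval y := by
  by_contra hy
  push_neg at hy
  have hy' : F.eval y < 0 := lt_of_le_of_ne hy (fun h => hnr y h)
  have hdeg : 0 < F.degree := by
    rcases Nat.eq_zero_or_pos F.natDegree with h0 | h0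
    · exfalso
      have hC : F = Polynomial.C (F.coeff 0) := Polynomial.eq_C_of_natDegree_eq_zero h0
      have h1 : F.coeff 0 = 1 := by
        have := hlc.leadingCoeff
        rwa [Polynomial.leadingCoeff, h0] at this
      rw [hC, h1] at hy'
      simp at hy'
      linarith
    · exact Polynomial.natDegree_pos_iff_degree_pos.mp h0
  have htop := Polynomial.tendsto_atTop_of_leadingCoeff_nonneg F hdeg (by
    rw [hlc.leadingCoeff]; norm_num)
  obtain ⟨M, hM⟩ := (Filter.tendsto_atTop.mp htop 1).exists_forall_of_atTop
  set M' := max M y with hM'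
  have h1 : (1:ℝ) ≤ F.eval M' := hM M' (le_max_left _ _)
  have hyM : y ≤ M' := le_max_right _ _
  have hmem : (0:ℝ) ∈ Set.Icc (F.eval y) (F.eval M') := ⟨le_of_lt hy', by linarith⟩
  obtain ⟨z, _, hz⟩ := intermediate_value_Icc hyM (F.continuous.continuousOn) hmem
  exact hnr z hz

theorem evenMult_nonneg : ∀ (k : ℕ) (F : Polynomial ℝ), F.natDegree = k → F.Monic →
    (∀ z : ℝ, Even (F.rootMultiplicity z)) → ∀ y : ℝ, 0 ≤ F.eval y := by
  intro k
  induction k using Nat.strong_induction_on with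
  | _ k ih =>
    intro F hdeg hmon hev y
    by_cases hroot : ∃ z : ℝ, F.IsRoot z
    · obtain ⟨z, hz⟩ := hroot
      have hF0 : F ≠ 0 := hmon.ne_zero
      have hrm : 0 < F.rootMultiplicity z := (Polynomial.rootMultiplicity_pos hF0).mpr hz
      have hrm2 : 2 ≤ F.rootMultiplicity z := by
        rcases hev z with ⟨m, hm⟩; omega
      have hdvd : (Polynomial.X - Polynomial.C z) ^ 2 ∣ F :=
        dvd_trans (pow_dvd_pow _ hrm2) (Polynomial.pow_rootMultiplicity_dvd F z)
      obtain ⟨G, hG⟩ := hdvd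
      have hmon2 : ((Polynomial.X - Polynomial.C z) ^ 2 : Polynomial ℝ).Monic := (Polynomial.monic_X_sub_C z).pow 2
      have hGmon : G.Monic := hmon2.of_mul_monic_left (hG ▸ hmon)
      have hG0 : G ≠ 0 := hGmon.ne_zero
      have hXz2 : ((Polynomial.X - Polynomial.C z) ^ 2 : Polynomial ℝ) ≠ 0 := pow_ne_zero _ (Polynomial.X_sub_C_ne_zero z)
      have hnd2 : ((Polynomial.X - Polynomial.C z) ^ 2 : Polynomial ℝ).natDegree = 2 := by
        rw [Polynomial.natDegree_pow, Polynomial.natDegree_X_sub_C]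
      have h2F : 2 ≤ F.natDegree := by
        have := Polynomial.natDegree_le_of_dvd ⟨G, hG⟩ hF0
        omega
      have hdegG : G.natDegree = F.natDegree - 2 := by
        rw [hG, Polynomial.natDegree_mul hXz2 hG0, hnd2]
        omega
      have hdeglt : G.natDegree < k := by omega
      have hevG : ∀ z' : ℝ, Even (G.rootMultiplicity z') := by
        intro z'
        have hmul : F.rootMultiplicity z' =
            ((Polynomial.X - Polynomial.C z) ^ 2 : Polynomial ℝ).rootMultiplicity z' + G.rootMultiplicity z' := by
          rw [hG]; exact Polynomial.rootMultiplicity_mul (hG ▸ hF0)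
        have hev2 : Even (((Polynomial.X - Polynomial.C z) ^ 2 : Polynomial ℝ).rootMultiplicity z') := by
          by_cases h : z' = z
          · subst h; rw [Polynomial.rootMultiplicity_X_sub_C_pow]; exact even_two
          · rw [Polynomial.rootMultiplicity_eq_zero (by
              simp only [Polynomial.IsRoot, Polynomial.eval_pow, Polynomial.eval_sub,
                Polynomial.eval_X, Polynomial.eval_C]
              exact pow_ne_zero _ (sub_ne_zero.mpr h))]
            exact Even.zero
        have := hev z'
        rw [hmul] at this
        exact (Nat.even_add.mp this).mp hev2
      have hGnn : 0 ≤ G.eval y := ih G.natDegree hdeglt G rfl hGmon hevG y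
      rw [hG]
      simp only [Polynomial.eval_mul, Polynomial.eval_pow, Polynomial.eval_sub,
        Polynomial.eval_X, Polynomial.eval_C]
      exact mul_nonneg (sq_nonneg _) hGnn
    · push_neg at hroot
      exact le_of_lt (pos_of_no_root F hmon hroot y)

end EvenMult
section Gauss
open Polynomial

variable {n : ℕ} (x : Fin n → ℝ)

/-- the empirical integration functional -/
noncomputable def Lfun (n : ℕ) (x : Fin n → ℝ) : Polynomial ℝ →ₗ[ℝ] ℝ :=
  (n : ℝ)⁻¹ • (∑ a : Fin n, Polynomial.leval (x a))

lemma Lfun_apply (p : Polynomial ℝ) :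
    Lfun n x p = (n : ℝ)⁻¹ * ∑ a : Fin n, p.eval (x a) := by
  simp [Lfun, Polynomial.leval_apply]

lemma Lfun_X_pow (i : ℕ) : Lfun n x (Polynomial.X ^ i) = momF n x i := by
  simp [Lfun_apply, momF]

lemma Lfun_nonneg (p : Polynomial ℝ) (hp : ∀ y, 0 ≤ p.eval y) : 0 ≤ Lfun n x p := by
  rw [Lfun_apply]
  have : (0:ℝ) ≤ ∑ a : Fin n, p.eval (x a) :=
    Finset.sum_nonneg fun a _ => hp (x a)
  positivity

lemma Lfun_eval_eq_zero (hn : 0 < n) (p : Polynomial ℝ) (hp : ∀ y, 0 ≤ p.eval y)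
    (hL : Lfun n x p = 0) : ∀ a, p.eval (x a) = 0 := by
  rw [Lfun_apply] at hL
  have hninv : ((n:ℝ))⁻¹ ≠ 0 := by positivity
  have hsum : ∑ a : Fin n, p.eval (x a) = 0 := by
    rcases mul_eq_zero.mp hL with h | h
    · exact absurd h hninv
    · exact h
  intro a
  have := (Finset.sum_eq_zero_iff_of_nonneg (fun a _ => hp (x a))).mp hsum
  exact this a (Finset.mem_univ a)

/-- vector to polynomial of degree < d -/
noncomputable def vPoly (d : ℕ) (v : Fin d → ℝ) : Polynomial ℝ :=
  ∑ i : Fin d, Polynomial.C (v i) * Polynomial.X ^ (i : ℕ)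

lemma vPoly_natDegree_lt (d : ℕ) (hd : 0 < d) (v : Fin d → ℝ) : (vPoly d v).natDegree < d := by
  have : (vPoly d v).natDegree ≤ d - 1 := by
    apply Polynomial.natDegree_sum_le_of_forall_le
    intro i _
    exact le_trans (Polynomial.natDegree_C_mul_X_pow_le _ _) (by omega)
  omega

lemma vPoly_coeff (d : ℕ) (v : Fin d → ℝ) (i : Fin d) : (vPoly d v).coeff (i : ℕ) = v i := by
  classical
  rw [vPoly]
  rw [Polynomial.finset_sum_coeff]
  rw [Finset.sum_eq_single i]
  · simp [Polynomial.coeff_C_mul, Polynomial.coeff_X_pow]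
  · intro j _ hji
    simp only [Polynomial.coeff_C_mul, Polynomial.coeff_X_pow]
    rw [if_neg (by simpa [Fin.val_eq_val] using hji.symm), mul_zero]
  · intro h; exact absurd (Finset.mem_univ i) h

lemma vPoly_ne_zero (d : ℕ) (v : Fin d → ℝ) (hv : v ≠ 0) : vPoly d v ≠ 0 := by
  obtain ⟨i, hi⟩ : ∃ i, v i ≠ 0 := by
    by_contra h; push_neg at h; exact hv (funext h)
  intro h
  apply hi
  rw [← vPoly_coeff d v i, h, Polynomial.coeff_zero]

lemma Lfun_vPoly_sq (d : ℕ) (v w : Fin d → ℝ) :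
    Lfun n x (vPoly d v * vPoly d w)
      = ∑ i : Fin d, ∑ j : Fin d, v i * w j * Lfun n x (Polynomial.X ^ ((i:ℕ) + j)) := by
  rw [vPoly, vPoly, Finset.sum_mul_sum, map_sum]
  refine Finset.sum_congr rfl fun i _ => ?_
  rw [map_sum]
  refine Finset.sum_congr rfl fun j _ => ?_
  have : Polynomial.C (v i) * Polynomial.X ^ (i:ℕ) * (Polynomial.C (w j) * Polynomial.X ^ (j:ℕ))
      = (v i * w j) • (Polynomial.X ^ ((i:ℕ) + j)) := by
    rw [Polynomial.smul_eq_C_mul, map_mul, pow_add]; ring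
  rw [this, map_smul, smul_eq_mul]

end Gauss
section Gauss2
open Polynomial

lemma exists_nonroot {n : ℕ} (x : Fin n → ℝ) (d : ℕ)
    (hbig : d + 1 ≤ (Finset.image x Finset.univ).card)
    (q : Polynomial ℝ) (hq : q ≠ 0) (hqd : q.natDegree < d) : ∃ a, q.eval (x a) ≠ 0 := by
  classical
  by_contra h
  push_neg at h
  have hsub : Finset.image x Finset.univ ⊆ q.roots.toFinset := by
    intro v hv
    obtain ⟨a, _, rfl⟩ := Finset.mem_image.mp hv
    rw [Multiset.mem_toFinset, Polynomial.mem_roots hq]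
    exact h a
  have := Finset.card_le_card hsub
  have h2 := Multiset.toFinset_card_le q.roots
  have h3 := Polynomial.card_roots' q
  omega

lemma exists_orthopoly (d : ℕ) {n : ℕ} (hd : 0 < d) (hn : 0 < n) (x : Fin n → ℝ)
    (hbig : d + 1 ≤ (Finset.image x Finset.univ).card) :
    ∃ P : Polynomial ℝ, P.Monic ∧ P.natDegree = d ∧
      ∀ h : Polynomial ℝ, h.natDegree < d → Lfun n x (P * h) = 0 := by
  classical
  set A : Matrix (Fin d) (Fin d) ℝ := fun i j => Lfun n x (Polynomial.X ^ ((i:ℕ) + j)) with hA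
  have hposdef : A.PosDef := by
    rw [Matrix.posDef_iff_dotProduct_mulVec]
    constructor
    · show A.conjTranspose = A
      ext i j
      rw [Matrix.conjTranspose_apply, star_trivial]
      simp only [hA]
      rw [Nat.add_comm]
    · intro v hv
      have hstar : star v = v := rfl
      rw [hstar]
      have hquad : dotProduct v (A.mulVec v) = Lfun n x (vPoly d v * vPoly d v) := by
        rw [Lfun_vPoly_sq]
        rw [dotProduct]
        refine Finset.sum_congr rfl fun i _ => ?_
        rw [Matrix.mulVec, dotProduct, Finset.mul_sum]
        refine Finset.sum_congr rfl fun j _ => ?_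
        simp only [hA]
        ring
      rw [hquad]
      obtain ⟨a, ha⟩ := exists_nonroot x d hbig (vPoly d v) (vPoly_ne_zero d v hv)
        (vPoly_natDegree_lt d hd v)
      rw [Lfun_apply]
      have hpos : 0 < ∑ b : Fin n, (vPoly d v * vPoly d v).eval (x b) := by
        apply Finset.sum_pos'
        · intro b _; rw [Polynomial.eval_mul]; exact mul_self_nonneg _
        · exact ⟨a, Finset.mem_univ a, by rw [Polynomial.eval_mul]; exact mul_self_pos.mpr ha⟩
      have : (0:ℝ) < (n:ℝ)⁻¹ := by positivity
      positivity
  have hunit : IsUnit A := hposdef.isUnit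
  have hdet : IsUnit A.det := (Matrix.isUnit_iff_isUnit_det A).mp hunit
  set r : Fin d → ℝ := fun i => Lfun n x (Polynomial.X ^ (d + (i:ℕ))) with hr
  set b : Fin d → ℝ := A⁻¹.mulVec r with hb
  have hAb : A.mulVec b = r := by
    rw [hb, Matrix.mulVec_mulVec, Matrix.mul_nonsing_inv A hdet, Matrix.one_mulVec]
  set P : Polynomial ℝ := Polynomial.X ^ d - vPoly d b with hP
  have hdegv : (vPoly d b).degree < (d : ℕ) := by
    rcases eq_or_ne (vPoly d b) 0 with h | h
    · rw [h, Polynomial.degree_zero]; exact WithBot.bot_lt_coe d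
    · exact (Polynomial.natDegree_lt_iff_degree_lt h).mp (vPoly_natDegree_lt d hd b)
  have hmon : P.Monic := Polynomial.monic_X_pow_sub hdegv
  have hPdeg : P.natDegree = d := by
    rw [hP, Polynomial.natDegree_sub_eq_left_of_natDegree_lt, Polynomial.natDegree_X_pow]
    rw [Polynomial.natDegree_X_pow]
    exact vPoly_natDegree_lt d hd b
  refine ⟨P, hmon, hPdeg, ?_⟩
  -- first: orthogonality against X^i for i < d
  have horth : ∀ i : Fin d, Lfun n x (P * Polynomial.X ^ (i:ℕ)) = 0 := by
    intro i
    have hexp : P * Polynomial.X ^ (i:ℕ)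
        = Polynomial.X ^ (d + (i:ℕ)) - vPoly d b * Polynomial.X ^ (i:ℕ) := by
      rw [hP, sub_mul, pow_add]
    rw [hexp, map_sub]
    have h1 : Lfun n x (vPoly d b * Polynomial.X ^ (i:ℕ))
        = ∑ j : Fin d, b j * Lfun n x (Polynomial.X ^ ((j:ℕ) + i)) := by
      rw [vPoly, Finset.sum_mul, map_sum]
      refine Finset.sum_congr rfl fun j _ => ?_
      have : Polynomial.C (b j) * Polynomial.X ^ (j:ℕ) * Polynomial.X ^ (i:ℕ)
          = (b j) • Polynomial.X ^ ((j:ℕ) + i) := by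
        rw [Polynomial.smul_eq_C_mul, pow_add, mul_assoc]
      rw [this, map_smul, smul_eq_mul]
    rw [h1]
    have h2 : ∑ j : Fin d, b j * Lfun n x (Polynomial.X ^ ((j:ℕ) + i)) = (A.mulVec b) i := by
      rw [Matrix.mulVec, dotProduct]
      refine Finset.sum_congr rfl fun j _ => ?_
      simp only [hA]
      rw [Nat.add_comm (i:ℕ) j]
      ring
    rw [h2, hAb, hr]
    ring
  -- general version
  intro h hh
  rw [Polynomial.as_sum_range' h d hh, Finset.mul_sum, map_sum]
  refine Finset.sum_eq_zero fun i hi => ?_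
  have hid : i < d := Finset.mem_range.mp hi
  have : P * (Polynomial.monomial i) (h.coeff i)
      = (h.coeff i) • (P * Polynomial.X ^ i) := by
    rw [← Polynomial.C_mul_X_pow_eq_monomial, Polynomial.smul_eq_C_mul]
    ring
  rw [this, map_smul, smul_eq_mul, horth ⟨i, hid⟩, mul_zero]

end Gauss2
section Gauss3
open Polynomial

lemma orthopoly_roots (d : ℕ) {n : ℕ} (hd : 0 < d) (hn : 0 < n) (x : Fin n → ℝ)
    (hbig : d + 1 ≤ (Finset.image x Finset.univ).card)
    (P : Polynomial ℝ) (hmon : P.Monic) (hPdeg : P.natDegree = d)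
    (horth : ∀ h : Polynomial ℝ, h.natDegree < d → Lfun n x (P * h) = 0) :
    ∃ S : Finset ℝ, S.card = d ∧ ∀ z ∈ S, P.IsRoot z := by
  classical
  have hP0 : P ≠ 0 := hmon.ne_zero
  set S : Finset ℝ := P.roots.toFinset.filter (fun z => Odd (P.rootMultiplicity z)) with hS
  have hSroot : ∀ z ∈ S, P.IsRoot z := by
    intro z hz
    rw [hS, Finset.mem_filter, Multiset.mem_toFinset, Polynomial.mem_roots hP0] at hz
    exact hz.1
  have hScard_le : S.card ≤ d := by
    have h1 : S.card ≤ P.roots.toFinset.card := Finset.card_le_card (Finset.filter_subset _ _)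
    have h2 := Multiset.toFinset_card_le P.roots
    have h3 := Polynomial.card_roots' P
    omega
  set Q : Polynomial ℝ := ∏ z ∈ S, (Polynomial.X - Polynomial.C z) with hQ
  have hQmon : Q.Monic := Polynomial.monic_prod_of_monic _ _ fun z _ => Polynomial.monic_X_sub_C z
  have hQdeg : Q.natDegree = S.card := by
    rw [hQ, Polynomial.natDegree_prod _ _ (fun z _ => Polynomial.X_sub_C_ne_zero z)]
    simp [Polynomial.natDegree_X_sub_C]
  have hPQmon : (P * Q).Monic := hmon.mul hQmon
  have hPQ0 : P * Q ≠ 0 := hPQmon.ne_zero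
  have hrmQ : ∀ z : ℝ, Q.rootMultiplicity z = if z ∈ S then 1 else 0 := by
    intro z
    rw [← Polynomial.count_roots, hQ, Polynomial.roots_prod_X_sub_C]
    by_cases h : z ∈ S
    · rw [if_pos h]
      exact Multiset.count_eq_one_of_mem S.nodup h
    · rw [if_neg h]
      exact Multiset.count_eq_zero_of_notMem (by simpa using h)
  have heven : ∀ z : ℝ, Even ((P * Q).rootMultiplicity z) := by
    intro z
    rw [Polynomial.rootMultiplicity_mul hPQ0, hrmQ z]
    by_cases h : z ∈ S
    · rw [if_pos h]
      have hodd : Odd (P.rootMultiplicity z) := (Finset.mem_filter.mp h).2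
      exact Nat.even_add_one.mpr (Nat.not_even_iff_odd.mpr hodd)
    · rw [if_neg h, add_zero]
      by_cases hroot : P.IsRoot z
      · rcases Nat.even_or_odd (P.rootMultiplicity z) with he | ho
        · exact he
        · exfalso
          apply h
          rw [hS, Finset.mem_filter, Multiset.mem_toFinset, Polynomial.mem_roots hP0]
          exact ⟨hroot, ho⟩
      · rw [Polynomial.rootMultiplicity_eq_zero hroot]
        exact Even.zero
  have hPQnn : ∀ y, 0 ≤ (P * Q).eval y :=
    evenMult_nonneg (P * Q).natDegree (P * Q) rfl hPQmon heven
  have hScard_ge : d ≤ S.card := by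
    by_contra hlt
    push_neg at hlt
    have hQd : Q.natDegree < d := by omega
    have hLPQ : Lfun n x (P * Q) = 0 := horth Q hQd
    have hzero := Lfun_eval_eq_zero x hn (P * Q) hPQnn hLPQ
    -- every sample point is a root of P
    have hProot : ∀ a, P.IsRoot (x a) := by
      intro a
      have := hzero a
      rw [Polynomial.eval_mul] at this
      rcases mul_eq_zero.mp this with h | h
      · exact h
      · -- x a is a root of Q, hence in S, hence a root of P
        rw [hQ, Polynomial.eval_prod] at h
        obtain ⟨z, hzS, hz⟩ := Finset.prod_eq_zero_iff.mp h
        simp only [Polynomial.eval_sub, Polynomial.eval_X, Polynomial.eval_C] at hz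
        have : x a = z := by linarith
        rw [this]
        exact hSroot z hzS
    have hsub : Finset.image x Finset.univ ⊆ P.roots.toFinset := by
      intro v hv
      obtain ⟨a, _, rfl⟩ := Finset.mem_image.mp hv
      rw [Multiset.mem_toFinset, Polynomial.mem_roots hP0]
      exact hProot a
    have h1 := Finset.card_le_card hsub
    have h2 := Multiset.toFinset_card_le P.roots
    have h3 := Polynomial.card_roots' P
    omega
  exact ⟨S, le_antisymm hScard_le hScard_ge, hSroot⟩

end Gauss3
section Gauss4
open Polynomial

lemma gauss_quadrature (d : ℕ) {n : ℕ} (hd : 0 < d) (hn : 0 < n) (x : Fin n → ℝ)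
    (hbig : d + 1 ≤ (Finset.image x Finset.univ).card) :
    ∃ (S : Finset ℝ) (w : ℝ → ℝ), S.card ≤ d ∧ (∀ v ∈ S, 0 ≤ w v) ∧
      (∀ i : ℕ, i < 2*d → ∑ v ∈ S, w v * v ^ i = momF n x i) ∧
      (∑ v ∈ S, w v * v ^ (2*d) ≤ momF n x (2*d)) := by
  classical
  obtain ⟨P, hmon, hPdeg, horth⟩ := exists_orthopoly d hd hn x hbig
  obtain ⟨S, hScard, hSroot⟩ := orthopoly_roots d hd hn x hbig P hmon hPdeg horth
  have hP0 : P ≠ 0 := hmon.ne_zero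
  have hinj : Set.InjOn (id : ℝ → ℝ) S := Function.injective_id.injOn
  set w : ℝ → ℝ := fun z => Lfun n x (Lagrange.basis S id z) with hw
  -- exactness for degree < d
  have hexlow : ∀ r : Polynomial ℝ, r.degree < (d : ℕ) → Lfun n x r = ∑ z ∈ S, w z * r.eval z := by
    intro r hr
    have hrS : r.degree < (S.card : ℕ) := by rw [hScard]; exact hr
    have hinterp := Lagrange.eq_interpolate (f := r) hinj hrS
    conv_lhs => rw [hinterp]
    rw [Lagrange.interpolate_apply, map_sum]
    refine Finset.sum_congr rfl fun z hz => ?_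
    simp only [id_eq]
    rw [← Polynomial.smul_eq_C_mul, map_smul, smul_eq_mul, hw]
    ring
  -- exactness for natDegree < 2d
  have hexmid : ∀ q : Polynomial ℝ, q.natDegree < 2*d →
      Lfun n x q = ∑ z ∈ S, w z * q.eval z := by
    intro q hq
    have hPd : P.degree = (d : ℕ) := by rw [Polynomial.degree_eq_natDegree hP0, hPdeg]
    have hdecomp := Polynomial.modByMonic_add_div q P
    have hrd : (q %ₘ P).degree < (d : ℕ) := by
      have := Polynomial.degree_modByMonic_lt q hmon
      rwa [hPd] at this
    have hhd : (q /ₘ P).natDegree < d := by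
      rw [Polynomial.natDegree_divByMonic q hmon, hPdeg]
      omega
    have hq1 : Lfun n x q = Lfun n x (q %ₘ P) := by
      conv_lhs => rw [← hdecomp]
      rw [map_add, horth (q /ₘ P) hhd, add_zero]
    have hq2 : ∀ z ∈ S, q.eval z = (q %ₘ P).eval z := by
      intro z hz
      conv_lhs => rw [← hdecomp]
      rw [Polynomial.eval_add, Polynomial.eval_mul, hSroot z hz, zero_mul, add_zero]
    rw [hq1, hexlow (q %ₘ P) hrd]
    refine Finset.sum_congr rfl fun z hz => ?_
    rw [hq2 z hz]
  -- nonnegativity of weights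
  have hwnn : ∀ z ∈ S, 0 ≤ w z := by
    intro z hz
    have hbdeg : (Lagrange.basis S id z).natDegree = S.card - 1 := Lagrange.natDegree_basis hinj hz
    have hsq : ((Lagrange.basis S id z) ^ 2).natDegree < 2 * d := by
      rw [Polynomial.natDegree_pow, hbdeg, hScard]
      omega
    have h1 := hexmid ((Lagrange.basis S id z) ^ 2) hsq
    have h2 : ∑ z' ∈ S, w z' * ((Lagrange.basis S id z) ^ 2).eval z' = w z := by
      rw [Finset.sum_eq_single z]
      · have hb1 : Polynomial.eval z (Lagrange.basis S id z) = 1 :=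
          Lagrange.eval_basis_self hinj hz
        rw [Polynomial.eval_pow, hb1]
        norm_num
      · intro z' hz' hne
        have hb0 : Polynomial.eval z' (Lagrange.basis S id z) = 0 :=
          Lagrange.eval_basis_of_ne (v := id) (Ne.symm hne) hz'
        rw [Polynomial.eval_pow, hb0]
        norm_num
      · intro h; exact absurd hz h
    rw [h2] at h1
    rw [← h1]
    apply Lfun_nonneg
    intro y
    rw [Polynomial.eval_pow]
    exact sq_nonneg _
  refine ⟨S, w, le_of_eq hScard, hwnn, ?_, ?_⟩
  · intro i hi
    have hXi : ((Polynomial.X : Polynomial ℝ) ^ i).natDegree < 2*d := by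
      rw [Polynomial.natDegree_X_pow]; exact hi
    have := hexmid (Polynomial.X ^ i) hXi
    rw [Lfun_X_pow] at this
    have h2 : ∑ z ∈ S, w z * Polynomial.eval z (Polynomial.X ^ i) = ∑ v ∈ S, w v * v ^ i :=
      Finset.sum_congr rfl fun z _ => by rw [Polynomial.eval_pow, Polynomial.eval_X]
    rw [← h2]
    exact this.symm
  · -- top moment
    set D : Polynomial ℝ := Polynomial.X ^ (2*d) - P * P with hD
    have hPP : (P * P).natDegree = 2*d := by
      rw [Polynomial.natDegree_mul hP0 hP0, hPdeg]; ring
    have hDdeg : D.natDegree < 2*d := by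
      rcases eq_or_ne D 0 with h | h
      · rw [h, Polynomial.natDegree_zero]; omega
      · rw [Polynomial.natDegree_lt_iff_degree_lt h]
        have hdeq : ((Polynomial.X : Polynomial ℝ) ^ (2*d)).degree = (P*P).degree := by
          rw [Polynomial.degree_eq_natDegree (mul_ne_zero hP0 hP0), hPP,
            Polynomial.degree_X_pow]
        have hlc : ((Polynomial.X : Polynomial ℝ) ^ (2*d)).leadingCoeff = (P*P).leadingCoeff := by
          rw [(hmon.mul hmon).leadingCoeff, (Polynomial.monic_X_pow (2*d)).leadingCoeff]
        have := Polynomial.degree_sub_lt hdeq (pow_ne_zero _ Polynomial.X_ne_zero) hlc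
        rw [hD]
        calc D.degree < ((Polynomial.X : Polynomial ℝ) ^ (2*d)).degree := this
          _ = ((2*d : ℕ) : WithBot ℕ) := Polynomial.degree_X_pow _
    have hsplit : (Polynomial.X : Polynomial ℝ) ^ (2*d) = D + P * P := by rw [hD]; ring
    have hLD := hexmid D hDdeg
    have hquad : ∑ z ∈ S, w z * z ^ (2*d) = Lfun n x D := by
      rw [hLD]
      refine Finset.sum_congr rfl fun z hz => ?_
      have : (z : ℝ) ^ (2*d) = D.eval z := by
        rw [hD, Polynomial.eval_sub, Polynomial.eval_pow, Polynomial.eval_X,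
          Polynomial.eval_mul, hSroot z hz, zero_mul, sub_zero]
      rw [this]
    rw [hquad, ← Lfun_X_pow x (2*d), hsplit, map_add]
    have : 0 ≤ Lfun n x (P * P) := by
      apply Lfun_nonneg
      intro y
      rw [Polynomial.eval_mul]
      exact mul_self_nonneg _
    linarith

end Gauss4

/-- the full quadrature lemma -/
lemma quadrature (d : ℕ) {n : ℕ} (hd : 0 < d) (hn : 0 < n) (x : Fin n → ℝ) :
    ∃ s t : Fin d → ℝ, (∀ j, 0 ≤ s j) ∧
      (∀ i : ℕ, i < 2*d → momQ d s t i = momF n x i) ∧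
      momQ d s t (2*d) ≤ momF n x (2*d) := by
  classical
  by_cases hcard : (Finset.image x Finset.univ).card ≤ d
  · obtain ⟨s, t, hs, hmom⟩ := quadrature_small d n hn x hcard
    exact ⟨s, t, hs, fun i _ => hmom i, le_of_eq (hmom (2*d))⟩
  · push_neg at hcard
    obtain ⟨S, w, hScard, hwnn, hmom, htop⟩ := gauss_quadrature d hd hn x hcard
    obtain ⟨s, t, hs, hpad⟩ := pad_lemma d S hScard w hwnn
    exact ⟨s, t, hs, fun i hi => by rw [hpad i, hmom i hi], by rw [hpad (2*d)]; exact htop⟩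
section Backward

lemma symForm_ge {d n : ℕ} (hd : 0 < d) (c : Nat.Partition (2*d) → ℝ) (x : Fin n → ℝ)
    (s t : Fin d → ℝ)
    (hmom : ∀ i : ℕ, i < 2*d → momQ d s t i = momF n x i)
    (htop : momQ d s t (2*d) ≤ momF n x (2*d))
    (hc : 0 ≤ c (Nat.Partition.indiscrete (2*d))) :
    phiForm d c s t ≤ eval x (symForm n c) := by
  have h2d : 0 < 2*d := by omega
  rw [eval_symForm, phiForm]
  apply Finset.sum_le_sum
  intro lam _
  by_cases hlam : lam = Nat.Partition.indiscrete (2*d)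
  · subst hlam
    rw [phiPart_eq, indiscrete_parts h2d]
    simp only [Multiset.map_singleton, Multiset.prod_singleton]
    exact mul_le_mul_of_nonneg_left htop hc
  · rw [phiPart_eq]
    have : lam.parts.map (momQ d s t) = lam.parts.map (momF n x) :=
      Multiset.map_congr rfl (fun i hi => hmom i (mem_parts_lt h2d lam hlam hi))
    rw [this]

lemma c_indiscrete_nonneg (d : ℕ) (hd : 2 ≤ d) (c : Nat.Partition (2*d) → ℝ)
    (hphi : ∀ s : Fin d → ℝ, (∀ i, 0 ≤ s i ∧ s i ≤ 1) → (∑ i : Fin d, s i = 1) →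
      ∀ t : Fin d → ℝ, 0 ≤ phiForm d c s t) :
    0 ≤ c (Nat.Partition.indiscrete (2*d)) := by
  classical
  have h2d : 0 < 2*d := by omega
  set j0 : Fin d := ⟨0, by omega⟩ with hj0
  set j1 : Fin d := ⟨1, by omega⟩ with hj1
  have hne : j0 ≠ j1 := by simp [hj0, hj1, Fin.ext_iff]
  set G : ℝ → ℝ := fun e =>
    ∑ lam : Nat.Partition (2*d), c lam * e ^ (Multiset.card lam.parts - 1) with hG
  have hGnn : ∀ e : ℝ, 0 < e → e ≤ 1 → 0 ≤ G e := by
    intro e he he1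
    set se : Fin d → ℝ := fun j => (if j = j0 then 1 - e else 0) + (if j = j1 then e else 0)
      with hse
    set te : Fin d → ℝ := fun j => if j = j1 then 1 else 0 with hte
    have hs1 : ∀ j, 0 ≤ se j ∧ se j ≤ 1 := by
      intro j
      simp only [hse]
      by_cases h0 : j = j0
      · subst h0
        rw [if_pos rfl, if_neg hne]
        constructor <;> linarith
      · rw [if_neg h0]
        by_cases h1 : j = j1
        · subst h1
          rw [if_pos rfl]
          constructor <;> linarith
        · rw [if_neg h1]
          norm_num
    have hsum : ∑ j : Fin d, se j = 1 := by
      rw [hse, Finset.sum_add_distrib, Finset.sum_ite_eq' Finset.univ j0 (fun _ => 1 - e),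
        Finset.sum_ite_eq' Finset.univ j1 (fun _ => e)]
      rw [if_pos (Finset.mem_univ j0), if_pos (Finset.mem_univ j1)]
      ring
    have hfac : ∀ i : ℕ, 0 < i → momQ d se te i = e := by
      intro i hi
      rw [momQ]
      have : ∀ j : Fin d, se j * te j ^ i = if j = j1 then se j1 else 0 := by
        intro j
        simp only [hte]
        by_cases h1 : j = j1
        · subst h1
          rw [if_pos rfl, if_pos rfl, one_pow, mul_one]
        · rw [if_neg h1, if_neg h1, zero_pow (by omega), mul_zero]
      rw [Finset.sum_congr rfl (fun j _ => this j), Finset.sum_ite_eq' Finset.univ j1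
        (fun _ => se j1), if_pos (Finset.mem_univ j1)]
      simp only [hse]
      simp [Ne.symm hne]
    have hphiG : phiForm d c se te = e * G e := by
      rw [phiForm, hG, Finset.mul_sum]
      refine Finset.sum_congr rfl fun lam _ => ?_
      have hcard : 0 < Multiset.card lam.parts := card_parts_pos h2d lam
      have hpp : phiPart d lam se te = e ^ (Multiset.card lam.parts) := by
        rw [phiPart_eq]
        have : lam.parts.map (momQ d se te) = lam.parts.map (fun _ => e) :=
          Multiset.map_congr rfl (fun i hi => hfac i (lam.parts_pos hi))
        rw [this, Multiset.map_const', Multiset.prod_replicate]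
      rw [hpp]
      have : e ^ (Multiset.card lam.parts) = e * e ^ (Multiset.card lam.parts - 1) := by
        conv_lhs => rw [show Multiset.card lam.parts = (Multiset.card lam.parts - 1) + 1 by omega]
        rw [pow_succ]
        ring
      rw [this]
      ring
    have h0 := hphi se hs1 hsum te
    rw [hphiG] at h0
    nlinarith
  have hGcont : Continuous G := by
    apply continuous_finset_sum
    intro lam _
    exact continuous_const.mul (continuous_pow _)
  have hG0 : G 0 = c (Nat.Partition.indiscrete (2*d)) := by
    simp only [hG]
    rw [Finset.sum_eq_single (Nat.Partition.indiscrete (2*d))]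
    · have : Multiset.card (Nat.Partition.indiscrete (2*d)).parts = 1 := by
        rw [indiscrete_parts h2d]; rfl
      rw [this]
      norm_num
    · intro lam _ hlam
      have h1 : Multiset.card lam.parts ≠ 1 := fun h => hlam (card_parts_eq_one h2d lam h)
      have h2 : 0 < Multiset.card lam.parts := card_parts_pos h2d lam
      rw [zero_pow (by omega), mul_zero]
    · intro h; exact absurd (Finset.mem_univ _) h
  rw [← hG0]
  have htend : Filter.Tendsto G (nhdsWithin 0 (Set.Ioi 0)) (nhds (G 0)) :=
    (hGcont.tendsto 0).mono_left nhdsWithin_le_nhds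
  refine ge_of_tendsto htend ?_
  filter_upwards [Ioc_mem_nhdsGT_of_mem (Set.mem_Ico.mpr ⟨le_refl (0:ℝ), zero_lt_one⟩)]
  intro e he
  exact hGnn e he.1 he.2

lemma backward_direction (d : ℕ) (hd : 2 ≤ d) (c : Nat.Partition (2*d) → ℝ)
    (hphi : ∀ s : Fin d → ℝ, (∀ i, 0 ≤ s i ∧ s i ≤ 1) → (∑ i : Fin d, s i = 1) →
      ∀ t : Fin d → ℝ, 0 ≤ phiForm d c s t) :
    ∀ n : ℕ, 2 * d ≤ n → ∀ x : Fin n → ℝ, 0 ≤ eval x (symForm n c) := by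
  intro n hn x
  have hd0 : 0 < d := by omega
  have hn0 : 0 < n := by omega
  obtain ⟨s, t, hs, hmom, htop⟩ := quadrature d hd0 hn0 x
  have hmom0 : momQ d s t 0 = 1 := by
    rw [hmom 0 (by omega), momF]
    simp
    field_simp
  have hsum : ∑ j : Fin d, s j = 1 := by
    rw [← hmom0, momQ]
    refine Finset.sum_congr rfl fun j _ => ?_
    rw [pow_zero, mul_one]
  have hs1 : ∀ j, 0 ≤ s j ∧ s j ≤ 1 := by
    intro j
    refine ⟨hs j, ?_⟩
    calc s j ≤ ∑ j' : Fin d, s j' :=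
          Finset.single_le_sum (fun j' _ => hs j') (Finset.mem_univ j)
      _ = 1 := hsum
  have h1 : 0 ≤ phiForm d c s t := hphi s hs1 hsum t
  have h2 : phiForm d c s t ≤ eval x (symForm n c) :=
    symForm_ge hd0 c x s t hmom htop (c_indiscrete_nonneg d hd c hphi)
  linarith

end Backward
section Forward
open Filter

lemma exists_sample (d N : ℕ) (hN : 0 < N) (t : Fin d → ℝ) (k : Fin d → ℕ)
    (hk : ∑ j, k j = N) :
    ∃ x : Fin N → ℝ, ∀ i : ℕ, momF N x i = momQ d (fun j => (k j : ℝ) / N) t i := by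
  have hcard : Fintype.card (Σ j : Fin d, Fin (k j)) = N := by
    rw [Fintype.card_sigma]
    simp [hk]
  let e := Fintype.equivFinOfCardEq hcard
  refine ⟨fun a => t (e.symm a).1, ?_⟩
  intro i
  rw [momF, momQ]
  have h1 : ∑ a : Fin N, t (e.symm a).1 ^ i = ∑ p : (Σ j : Fin d, Fin (k j)), t p.1 ^ i :=
    Equiv.sum_comp e.symm (fun p => t p.1 ^ i)
  have h2 : ∑ p : (Σ j : Fin d, Fin (k j)), t p.1 ^ i = ∑ j : Fin d, (k j : ℝ) * t j ^ i := by
    have hss := Finset.sum_sigma' (Finset.univ : Finset (Fin d))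
      (fun j => (Finset.univ : Finset (Fin (k j)))) (fun j _ => t j ^ i)
    rw [Finset.univ_sigma_univ] at hss
    rw [← hss]
    refine Finset.sum_congr rfl fun j _ => ?_
    rw [Finset.sum_const, Finset.card_univ, Fintype.card_fin, nsmul_eq_mul]
  rw [h1, h2, Finset.mul_sum]
  refine Finset.sum_congr rfl fun j _ => ?_
  have hN' : (N:ℝ) ≠ 0 := Nat.cast_ne_zero.mpr (by omega)
  field_simp
  try ring

lemma tendsto_multiset_map_prod {ι β : Type*} {l : Filter β} (m : Multiset ι)
    (f : ι → β → ℝ) (g : ι → ℝ) (h : ∀ i ∈ m, Tendsto (f i) l (nhds (g i))) :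
    Tendsto (fun b => (m.map (fun i => f i b)).prod) l (nhds ((m.map g).prod)) := by
  induction m using Multiset.induction_on with
  | empty => simpa using tendsto_const_nhds
  | cons a m ih =>
    simp only [Multiset.map_cons, Multiset.prod_cons]
    exact (h a (Multiset.mem_cons_self a m)).mul
      (ih fun i hi => h i (Multiset.mem_cons_of_mem hi))

lemma forward_direction (d : ℕ) (hd : 2 ≤ d) (c : Nat.Partition (2*d) → ℝ)
    (hf : ∀ n : ℕ, 2 * d ≤ n → ∀ x : Fin n → ℝ, 0 ≤ eval x (symForm n c)) :
    ∀ s : Fin d → ℝ, (∀ i, 0 ≤ s i ∧ s i ≤ 1) → (∑ i : Fin d, s i = 1) →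
      ∀ t : Fin d → ℝ, 0 ≤ phiForm d c s t := by
  classical
  intro s hs hsum t
  have hd0 : 0 < d := by omega
  set jl : Fin d := ⟨d - 1, by omega⟩ with hjl
  set flo : ℕ → Fin d → ℕ := fun N j => ⌊s j * N⌋₊ with hflo
  set k : ℕ → Fin d → ℕ := fun N j =>
    if j = jl then N - ∑ j' ∈ Finset.univ.erase jl, flo N j' else flo N j with hk
  have hserase : ∑ j' ∈ Finset.univ.erase jl, s j' = 1 - s jl := by
    have := Finset.add_sum_erase Finset.univ s (Finset.mem_univ jl)
    rw [hsum] at this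
    linarith
  have hfloor_le : ∀ N : ℕ, (∑ j' ∈ Finset.univ.erase jl, flo N j') ≤ N := by
    intro N
    have hcast : ((∑ j' ∈ Finset.univ.erase jl, flo N j' : ℕ) : ℝ) ≤ (N : ℝ) := by
      push_cast
      calc ∑ j' ∈ Finset.univ.erase jl, ((⌊s j' * N⌋₊ : ℝ))
          ≤ ∑ j' ∈ Finset.univ.erase jl, s j' * N := by
            refine Finset.sum_le_sum fun j' _ => ?_
            exact Nat.floor_le (mul_nonneg (hs j').1 (Nat.cast_nonneg N))
        _ = (1 - s jl) * N := by rw [← hserase, Finset.sum_mul]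
        _ ≤ 1 * N := by
            apply mul_le_mul_of_nonneg_right _ (Nat.cast_nonneg N)
            have := (hs jl).1
            linarith
        _ = N := one_mul _
    exact_mod_cast hcast
  have hksum : ∀ N : ℕ, ∑ j, k N j = N := by
    intro N
    rw [← Finset.add_sum_erase Finset.univ (k N) (Finset.mem_univ jl)]
    have h1 : k N jl = N - ∑ j' ∈ Finset.univ.erase jl, flo N j' := by
      simp only [hk, if_pos rfl]
    have h2 : ∑ j' ∈ Finset.univ.erase jl, k N j' = ∑ j' ∈ Finset.univ.erase jl, flo N j' := by
      refine Finset.sum_congr rfl fun j' hj' => ?_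
      simp only [hk, if_neg (Finset.ne_of_mem_erase hj')]
    rw [h1, h2]
    have := hfloor_le N
    omega
  set sN : ℕ → Fin d → ℝ := fun N j => (k N j : ℝ) / N with hsN
  -- eventual nonnegativity
  have hev : ∀ᶠ N : ℕ in atTop, 0 ≤ phiForm d c (sN N) t := by
    filter_upwards [Filter.eventually_ge_atTop (2*d)]
    intro N hN
    have hN0 : 0 < N := by omega
    obtain ⟨x, hx⟩ := exists_sample d N hN0 t (k N) (hksum N)
    have := hf N hN x
    rwa [eval_symForm_eq_phiForm c x (sN N) t (fun i => hx i)] at this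
  -- convergence of the weights
  have htendj : ∀ j : Fin d, Tendsto (fun N => sN N j) atTop (nhds (s j)) := by
    intro j
    by_cases hjjl : j = jl
    · have heq : ∀ᶠ N : ℕ in atTop, sN N j
          = 1 - ∑ j' ∈ Finset.univ.erase jl, (flo N j' : ℝ) / N := by
        filter_upwards [Filter.eventually_ge_atTop 1]
        intro N hN1
        have hN' : (N:ℝ) ≠ 0 := Nat.cast_ne_zero.mpr (by omega)
        have hkval : k N j = N - ∑ j' ∈ Finset.univ.erase jl, flo N j' := by
          simp only [hk, if_pos hjjl]
        simp only [hsN]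
        rw [hkval, Nat.cast_sub (hfloor_le N)]
        push_cast
        rw [sub_div, Finset.sum_div]
        congr 1
        field_simp
      have hsub : Tendsto (fun N : ℕ => ∑ j' ∈ Finset.univ.erase jl, (flo N j' : ℝ) / N)
          atTop (nhds (1 - s j)) := by
        have h0 : (1 : ℝ) - s j = ∑ j' ∈ Finset.univ.erase jl, s j' := by
          rw [hserase, hjjl]
        rw [h0]
        apply tendsto_finset_sum
        intro j' _
        have := (tendsto_nat_floor_mul_div_atTop (R := ℝ) (hs j').1).comp
          (tendsto_natCast_atTop_atTop (R := ℝ))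
        simpa [hflo, Function.comp_def] using this
      have hlim := (tendsto_const_nhds (x := (1:ℝ)) (f := atTop (α := ℕ))).sub hsub
      simp only [sub_sub_cancel] at hlim
      exact Tendsto.congr' (heq.mono fun N h => h.symm) hlim
    · have heq : (fun N : ℕ => sN N j) = fun N : ℕ => ((flo N j : ℕ) : ℝ) / N := by
        funext N
        simp only [hsN, hk, if_neg hjjl]
      rw [heq]
      have := (tendsto_nat_floor_mul_div_atTop (R := ℝ) (hs j).1).comp
        (tendsto_natCast_atTop_atTop (R := ℝ))
      simpa [hflo, Function.comp_def] using this
  -- convergence of phiForm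
  have hphitend : Tendsto (fun N => phiForm d c (sN N) t) atTop (nhds (phiForm d c s t)) := by
    apply tendsto_finset_sum
    intro lam _
    apply Tendsto.const_mul
    rw [phiPart_eq]
    have hpp : ∀ N, phiPart d lam (sN N) t = (lam.parts.map (fun i => momQ d (sN N) t i)).prod :=
      fun N => phiPart_eq d lam (sN N) t
    simp only [hpp]
    apply tendsto_multiset_map_prod
    intro i _
    rw [momQ]
    apply tendsto_finset_sum
    intro j _
    exact ((htendj j).mul_const (t j ^ i))
  exact ge_of_tendsto hphitend hev

end Forward

/-- For `d ≥ 2`, the symmetric form `f^{(n)} = Σ_{λ⊢2d} c_λ p_λ^{(n)}` is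
nonnegative on `ℝ^n` for every `n ≥ 2d` if and only if `Φ_c(s,t)` is
nonnegative on `Δ × ℝ^d`, where `Δ` is the standard simplex in `ℝ^d`. -/
theorem nonneg_all_n_iff_phi_on_simplex (d : ℕ) (hd : 2 ≤ d)
    (c : Nat.Partition (2 * d) → ℝ) :
    (∀ n : ℕ, 2 * d ≤ n → ∀ x : Fin n → ℝ, 0 ≤ eval x (symForm n c)) ↔
    (∀ s : Fin d → ℝ, (∀ i, 0 ≤ s i ∧ s i ≤ 1) → (∑ i : Fin d, s i = 1) →
      ∀ t : Fin d → ℝ, 0 ≤ phiForm d c s t) :=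
  ⟨fun hf => forward_direction d hd c hf, fun hphi => backward_direction d hd c hphi⟩
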